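/- Let G be a simple graph on a finite vertex type V and let v ∈ V be a pendant vertex, i.e., a vertex of degree one. Then T̂(G;x,y) = x · T̂(G';x,y), where G' is the induced subgraph of G on the vertex set V ∖ {v} (equivalently, G' is the contraction G/e along the pendant edge e at v). -/
import Mathlib


open MvPolynomial

/-- The edge set of `G` as a `Finset`. -/
noncomputable def graphEdges {V : Type*} [Fintype V] (G : SimpleGraph V) : Finset (Sym2 V) :=
  G.edgeSet.toFinite.toFinset

/-- `b0 s` is the number of connected components of the spanning subgraph `[G:s]`
with vertex set `V` and edge set `s`. -/
noncomputable def b0 {V : Type*} [Fintype V] (s : Finset (Sym2 V)) : ℕ :=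
  Nat.card (SimpleGraph.fromEdgeSet (↑s : Set (Sym2 V))).ConnectedComponent

/-- `b1 s = |s| - r(s)` where `r(s) = |V| - b0 s`, i.e. the first Betti number of `[G:s]`. -/
noncomputable def b1 {V : Type*} [Fintype V] (s : Finset (Sym2 V)) : ℕ :=
  s.card + b0 (V := V) s - Fintype.card V

/-- `T̂(G;x,y) = ∑_{s ⊆ E(G)} (-1)^{|s|} (1+x)^{b0(s)} (1+y)^{b1(s)}` in `ℤ[x,y]`,
where `x = X 0`, `y = X 1`. -/
noncomputable def That {V : Type*} [Fintype V] (G : SimpleGraph V) : MvPolynomial (Fin 2) ℤ :=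
  ∑ s ∈ (graphEdges G).powerset,
    (-1 : MvPolynomial (Fin 2) ℤ) ^ s.card * (1 + X 0) ^ b0 s * (1 + X 1) ^ b1 s

/-! ### Auxiliary material -/

/-- Lift a function that is constant on adjacent vertices to connected components. -/
private lemma eq_of_walk {α : Type*} {β : Type*} {G : SimpleGraph α} (f : α → β)
    (h : ∀ x y, G.Adj x y → f x = f y) : ∀ {x y : α}, G.Walk x y → f x = f y := by
  intro x y w
  induction w with
  | nil => rfl
  | cons h' _ ih => exact (h _ _ h').trans ih

def liftAdj {α : Type*} {G : SimpleGraph α} {β : Type*} (f : α → β)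
    (h : ∀ x y, G.Adj x y → f x = f y) : G.ConnectedComponent → β :=
  Quot.lift f fun _ _ hr => hr.elim fun w => eq_of_walk f h w

@[simp] lemma liftAdj_mk {α : Type*} {G : SimpleGraph α} {β : Type*} (f : α → β)
    (h : ∀ x y, G.Adj x y → f x = f y) (x : α) :
    liftAdj f h (G.connectedComponentMk x) = f x := rfl

/-- The graph homomorphism from a graph on a subtype to the corresponding graph on the
ambient type. -/
def homUp {V : Type*} [DecidableEq V] (P : Set V) (s : Finset (Sym2 ↥P)) (t : Finset (Sym2 V))
    (ht : s.image (Sym2.map (Subtype.val : ↥P → V)) ⊆ t) :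
    SimpleGraph.fromEdgeSet (↑s : Set (Sym2 ↥P)) →g
      SimpleGraph.fromEdgeSet (↑t : Set (Sym2 V)) where
  toFun := Subtype.val
  map_rel' := by
    intro a c h
    rw [SimpleGraph.fromEdgeSet_adj] at h ⊢
    refine ⟨?_, fun hc => h.2 (Subtype.val_injective hc)⟩
    have := ht (Finset.mem_image_of_mem (Sym2.map Subtype.val) (Finset.mem_coe.1 h.1))
    rwa [Sym2.map_pair_eq, ← Finset.mem_coe] at this

lemma adj_down {V : Type*} [DecidableEq V] {v : V} {s : Finset (Sym2 ↥({v}ᶜ : Set V))}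
    {x y : V} (hm : s(x, y) ∈ s.image (Sym2.map Subtype.val)) (hne : x ≠ y) :
    ∃ (hx : x ∈ ({v}ᶜ : Set V)) (hy : y ∈ ({v}ᶜ : Set V)),
      (SimpleGraph.fromEdgeSet (↑s : Set (Sym2 ↥({v}ᶜ : Set V)))).Adj ⟨x, hx⟩ ⟨y, hy⟩ := by
  obtain ⟨b, hb, hfb⟩ := Finset.mem_image.1 hm
  induction b using Sym2.ind with | _ a c =>
  rw [Sym2.map_pair_eq] at hfb
  rcases Sym2.eq_iff.1 hfb with ⟨h1, h2⟩ | ⟨h1, h2⟩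
  · subst h1; subst h2
    refine ⟨a.2, c.2, (SimpleGraph.fromEdgeSet_adj _).2 ⟨?_, fun hc => hne (congrArg Subtype.val hc)⟩⟩
    exact Finset.mem_coe.2 hb
  · subst h1; subst h2
    refine ⟨c.2, a.2, (SimpleGraph.fromEdgeSet_adj _).2 ⟨?_, fun hc => hne (congrArg Subtype.val hc)⟩⟩
    rw [Sym2.eq_swap]
    exact Finset.mem_coe.2 hb

lemma v_notMem_map {V : Type*} [DecidableEq V] {v : V} (b : Sym2 ↥({v}ᶜ : Set V)) :
    v ∉ Sym2.map (Subtype.val : ↥({v}ᶜ : Set V) → V) b := by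
  induction b using Sym2.ind with | _ a c =>
  rw [Sym2.map_pair_eq, Sym2.mem_iff]
  rintro (h | h)
  · exact a.2 (by simp [h])
  · exact c.2 (by simp [h])

lemma b0_image {V : Type*} [Fintype V] [DecidableEq V] (v : V)
    (s : Finset (Sym2 ↥({v}ᶜ : Set V))) :
    b0 (V := V) (s.image (Sym2.map Subtype.val)) = b0 (V := ↥({v}ᶜ : Set V)) s + 1 := by
  classical
  set SG := SimpleGraph.fromEdgeSet (↑s : Set (Sym2 ↥({v}ᶜ : Set V))) with hSG
  let φ := homUp ({v}ᶜ : Set V) s (s.image (Sym2.map Subtype.val)) subset_rfl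
  have hE : (SimpleGraph.fromEdgeSet
      (↑(s.image (Sym2.map Subtype.val)) : Set (Sym2 V))).ConnectedComponent ≃
      Option SG.ConnectedComponent :=
    { toFun := liftAdj
        (fun x => if hx : x ∈ ({v}ᶜ : Set V) then some (SG.connectedComponentMk ⟨x, hx⟩)
          else none)
        (by
          intro x y hxy
          obtain ⟨hm, hne⟩ := (SimpleGraph.fromEdgeSet_adj _).1 hxy
          obtain ⟨hx, hy, hadj⟩ := adj_down (Finset.mem_coe.1 hm) hne
          simp only [dif_pos hx, dif_pos hy]
          exact congrArg some (SimpleGraph.ConnectedComponent.sound hadj.reachable))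
      invFun := fun o => match o with
        | none => (SimpleGraph.fromEdgeSet
            (↑(s.image (Sym2.map Subtype.val)) : Set (Sym2 V))).connectedComponentMk v
        | some C => C.map φ
      left_inv := by
        intro C
        induction C using SimpleGraph.ConnectedComponent.ind with | _ x =>
        by_cases hx : x ∈ ({v}ᶜ : Set V)
        · rw [liftAdj_mk, dif_pos hx]
          rfl
        · have hxv : x = v := by simpa using hx
          subst hxv
          rw [liftAdj_mk, dif_neg hx]
      right_inv := by
        intro o
        rcases o with _ | C
        · show liftAdj _ _ (_root_.SimpleGraph.connectedComponentMk _ v) = none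
          rw [liftAdj_mk, dif_neg (by simp : ¬ v ∈ ({v}ᶜ : Set V))]
        · induction C using SimpleGraph.ConnectedComponent.ind with | _ w =>
          show liftAdj _ _ ((SG.connectedComponentMk w).map φ) = some _
          rw [SimpleGraph.ConnectedComponent.map_mk, liftAdj_mk]
          exact dif_pos w.2 }
  haveI : Finite SG.ConnectedComponent := Quot.finite _
  exact (Nat.card_congr hE).trans Finite.card_option

lemma b0_insert {V : Type*} [Fintype V] [DecidableEq V] (v : V) (u : ↥({v}ᶜ : Set V))
    (s : Finset (Sym2 ↥({v}ᶜ : Set V))) :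
    b0 (V := V) (insert s(v, (u : V)) (s.image (Sym2.map Subtype.val)))
      = b0 (V := ↥({v}ᶜ : Set V)) s := by
  classical
  set SG := SimpleGraph.fromEdgeSet (↑s : Set (Sym2 ↥({v}ᶜ : Set V))) with hSG
  set T : Finset (Sym2 V) := insert s(v, (u : V)) (s.image (Sym2.map Subtype.val)) with hT
  let φ := homUp ({v}ᶜ : Set V) s T (by rw [hT]; exact Finset.subset_insert _ _)
  have huv : (u : V) ≠ v := u.2
  have hadjvu : (SimpleGraph.fromEdgeSet (↑T : Set (Sym2 V))).Adj v (u : V) := by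
    rw [SimpleGraph.fromEdgeSet_adj]
    exact ⟨Finset.mem_coe.2 (Finset.mem_insert_self _ _), fun hc => huv hc.symm⟩
  have hE : (SimpleGraph.fromEdgeSet (↑T : Set (Sym2 V))).ConnectedComponent ≃
      SG.ConnectedComponent :=
    { toFun := liftAdj
        (fun x => if hx : x ∈ ({v}ᶜ : Set V) then SG.connectedComponentMk ⟨x, hx⟩
          else SG.connectedComponentMk u)
        (by
          intro x y hxy
          obtain ⟨hm, hne⟩ := (SimpleGraph.fromEdgeSet_adj _).1 hxy
          rw [Finset.mem_coe, hT, Finset.mem_insert] at hm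
          rcases hm with hm | hm
          · rcases Sym2.eq_iff.1 hm with ⟨h1, h2⟩ | ⟨h1, h2⟩
            · simp only [h1, h2]
              rw [dif_neg (by simp : ¬ v ∈ ({v}ᶜ : Set V)), dif_pos u.2]
            · simp only [h1, h2]
              rw [dif_pos u.2, dif_neg (by simp : ¬ v ∈ ({v}ᶜ : Set V))]
          · obtain ⟨hx, hy, hadj⟩ := adj_down hm hne
            simp only [dif_pos hx, dif_pos hy]
            exact SimpleGraph.ConnectedComponent.sound hadj.reachable)
      invFun := fun C => C.map φ
      left_inv := by
        intro C
        induction C using SimpleGraph.ConnectedComponent.ind with | _ x =>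
        by_cases hx : x ∈ ({v}ᶜ : Set V)
        · rw [liftAdj_mk, dif_pos hx]
          rfl
        · have hxv : x = v := by simpa using hx
          subst hxv
          rw [liftAdj_mk, dif_neg hx]
          show (SG.connectedComponentMk u).map φ = _
          rw [SimpleGraph.ConnectedComponent.map_mk]
          exact SimpleGraph.ConnectedComponent.sound hadjvu.symm.reachable
      right_inv := by
        intro C
        induction C using SimpleGraph.ConnectedComponent.ind with | _ w =>
        show liftAdj _ _ ((SG.connectedComponentMk w).map φ) = _
        rw [SimpleGraph.ConnectedComponent.map_mk, liftAdj_mk]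
        exact dif_pos w.2 }
  exact Nat.card_congr hE

/-- if `v` is a pendant vertex (degree one) of `G`, then
`T̂(G;x,y) = x · T̂(G';x,y)` where `G'` is the induced subgraph on `V ∖ {v}`. -/
theorem That_pendant {V : Type*} [Fintype V] [DecidableEq V] (G : SimpleGraph V)
    [DecidableRel G.Adj] (v : V) (hv : G.degree v = 1) :
    That G = X 0 * That (G.induce ({v}ᶜ : Set V)) := by
  classical
  -- the unique neighbour
  obtain ⟨u0, hnb⟩ := Finset.card_eq_one.1 hv
  have hu_all : ∀ x, G.Adj v x ↔ x = u0 := by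
    intro x
    rw [← SimpleGraph.mem_neighborFinset, hnb, Finset.mem_singleton]
  have hadj : G.Adj v u0 := (hu_all u0).2 rfl
  have hu0v : u0 ≠ v := hadj.ne'
  set w : ↥({v}ᶜ : Set V) := ⟨u0, by simp [hu0v]⟩ with hw
  set e : Sym2 V := s(v, u0) with he
  set E' : Finset (Sym2 ↥({v}ᶜ : Set V)) := graphEdges (G.induce ({v}ᶜ : Set V)) with hE'
  set fm : Sym2 ↥({v}ᶜ : Set V) → Sym2 V := Sym2.map Subtype.val with hfm
  have hfinj : Function.Injective fm := Sym2.map.injective Subtype.val_injective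
  have he_notMem : ∀ t : Finset (Sym2 ↥({v}ᶜ : Set V)), e ∉ t.image fm := by
    intro t ht
    obtain ⟨b, _, hfb⟩ := Finset.mem_image.1 ht
    exact v_notMem_map b (by rw [← hfm, hfb, he]; exact Sym2.mem_mk_left v u0)
  -- edge decomposition
  have hE : graphEdges G = insert e (E'.image fm) := by
    ext a
    induction a using Sym2.ind with | _ x y =>
    simp only [graphEdges, Set.Finite.mem_toFinset, SimpleGraph.mem_edgeSet, Finset.mem_insert,
      Finset.mem_image]
    constructor
    · intro h
      by_cases hx : x = v
      · subst hx
        left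
        rw [(hu_all y).1 h]
      · by_cases hy : y = v
        · subst hy
          left
          rw [(hu_all x).1 h.symm, he]
          exact Sym2.eq_swap
        · right
          refine ⟨s(⟨x, by simp [hx]⟩, ⟨y, by simp [hy]⟩), ?_, by rw [hfm, Sym2.map_pair_eq]⟩
          rw [hE']
          simp only [graphEdges, Set.Finite.mem_toFinset, SimpleGraph.mem_edgeSet,
            SimpleGraph.comap_adj, Function.Embedding.coe_subtype]
          exact h
    · rintro (hm | ⟨b, hb, hfb⟩)
      · rw [he] at hm
        rcases Sym2.eq_iff.1 hm with ⟨h1, h2⟩ | ⟨h1, h2⟩ <;> subst h1 <;> subst h2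
        · exact hadj
        · exact hadj.symm
      · induction b using Sym2.ind with | _ a c =>
        rw [hfm, Sym2.map_pair_eq] at hfb
        rw [hE'] at hb
        simp only [graphEdges, Set.Finite.mem_toFinset, SimpleGraph.mem_edgeSet,
          SimpleGraph.comap_adj, Function.Embedding.coe_subtype] at hb
        rcases Sym2.eq_iff.1 hfb with ⟨h1, h2⟩ | ⟨h1, h2⟩ <;> subst h1 <;> subst h2
        · exact hb
        · exact hb.symm
    -- powerset of the image
  have hpow : (E'.image fm).powerset = E'.powerset.image (Finset.image fm) := by
    ext t
    simp only [Finset.mem_powerset, Finset.mem_image]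
    constructor
    · intro ht
      refine ⟨E'.filter (fun b => fm b ∈ t), Finset.filter_subset _ _, ?_⟩
      ext a
      simp only [Finset.mem_image, Finset.mem_filter]
      constructor
      · rintro ⟨b, ⟨_, hbt⟩, rfl⟩
        exact hbt
      · intro hat
        obtain ⟨b, hbE, hfb⟩ := Finset.mem_image.1 (ht hat)
        exact ⟨b, ⟨hbE, hfb ▸ hat⟩, hfb⟩
    · rintro ⟨t', ht', rfl⟩
      exact Finset.image_subset_image ht'
  have himg_inj : ∀ x ∈ E'.powerset, ∀ y ∈ E'.powerset,
      Finset.image fm x = Finset.image fm y → x = y :=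
    fun x _ y _ h => Finset.image_injective hfinj h
  -- cardinality of the vertex sets
  have hVW : Fintype.card V = Fintype.card ↥({v}ᶜ : Set V) + 1 := by
    have h1 : Fintype.card ↥({v}ᶜ : Set V) = Fintype.card V - Fintype.card ↥({v} : Set V) :=
      Fintype.card_compl_set _
    have h2 : Fintype.card ↥({v} : Set V) = 1 := Set.card_singleton v
    have h3 : 0 < Fintype.card V := Fintype.card_pos_iff.2 ⟨v⟩
    omega
  -- the main computation
  unfold That
  rw [hE, Finset.sum_powerset_insert (he_notMem E'), hpow, Finset.sum_image himg_inj,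
    Finset.sum_image himg_inj, ← Finset.sum_add_distrib, Finset.mul_sum]
  refine Finset.sum_congr rfl ?_
  intro t _
  have hb0i : b0 (V := V) (t.image fm) = b0 (V := ↥({v}ᶜ : Set V)) t + 1 := b0_image v t
  have hb0e : b0 (V := V) (insert e (t.image fm)) = b0 (V := ↥({v}ᶜ : Set V)) t := by
    have := b0_insert v w t
    simpa [hw, he] using this
  have hci : (t.image fm).card = t.card := Finset.card_image_of_injective _ hfinj
  have hce : (insert e (t.image fm)).card = t.card + 1 := by
    rw [Finset.card_insert_of_notMem (he_notMem t), hci]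
  have hb1i : b1 (V := V) (t.image fm) = b1 (V := ↥({v}ᶜ : Set V)) t := by
    unfold b1
    rw [hci, hb0i, hVW]
    omega
  have hb1e : b1 (V := V) (insert e (t.image fm)) = b1 (V := ↥({v}ᶜ : Set V)) t := by
    unfold b1
    rw [hce, hb0e, hVW]
    omega
  rw [hb1i, hb1e, hb0i, hb0e, hci, hce]
  ring
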